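/- (Theorem 2) Let M⋆ ∈ ℝ^{n×n} be symmetric positive definite with M⋆⁻¹ = φ_Mᵀ φ_M, let P := φ_Pᵀ φ_P (so P is symmetric positive definite), and let R ∈ ℝ^{n×n} be symmetric positive definite. If 4·λ_max(P)·λ_max(M⋆) ≤ (λ_min(R))², then the spectrum of the saddle-point matrix N is real and positive: every eigenvalue λ ∈ ℂ of N (viewed as a complex matrix) satisfies Im(λ) = 0 and Re(λ) > 0. -/

import Mathlib

open Matrix

namespace SaddleAux

variable {n : ℕ}

lemma expand_form {A : Matrix (Fin n) (Fin n) ℝ} (x : Fin n → ℂ) :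
    star x ⬝ᵥ ((A.map (Complex.ofReal)) *ᵥ x)
      = ∑ i, ∑ j, (starRingEnd ℂ) (x i) * ((A i j : ℂ) * x j) := by
  simp [dotProduct, mulVec, Finset.mul_sum, Matrix.map_apply, Complex.star_def]

lemma skew_sum_zero (f : Fin n → Fin n → ℝ) (hf : ∀ i j, f j i = - f i j) :
    ∑ i, ∑ j, f i j = 0 := by
  have h : (∑ i, ∑ j, f i j) = ∑ j, ∑ i, f i j := Finset.sum_comm
  have h2 : (∑ j : Fin n, ∑ i : Fin n, f i j) = - ∑ i, ∑ j, f i j := by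
    rw [← Finset.sum_neg_distrib]
    refine Finset.sum_congr rfl fun j _ => ?_
    rw [← Finset.sum_neg_distrib]
    exact Finset.sum_congr rfl fun i _ => by rw [hf]
  linarith [h, h2]

lemma cquad {A : Matrix (Fin n) (Fin n) ℝ} (hA : Aᵀ = A) (x : Fin n → ℂ) :
    star x ⬝ᵥ ((A.map (Complex.ofReal)) *ᵥ x)
      = (((fun i => (x i).re) ⬝ᵥ (A *ᵥ fun i => (x i).re)
        + (fun i => (x i).im) ⬝ᵥ (A *ᵥ fun i => (x i).im) : ℝ) : ℂ) := by
  have hsym : ∀ i j, A j i = A i j := fun i j => congrFun (congrFun hA.symm j) i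
  rw [expand_form]
  apply Complex.ext
  · simp only [Complex.re_sum, Complex.mul_re, Complex.mul_im, Complex.ofReal_re,
      Complex.ofReal_im, Complex.conj_re, Complex.conj_im, dotProduct, mulVec,
      Finset.mul_sum]
    rw [← Finset.sum_add_distrib]
    refine Finset.sum_congr rfl fun i _ => ?_
    rw [← Finset.sum_add_distrib]
    exact Finset.sum_congr rfl fun j _ => by ring
  · simp only [Complex.im_sum, Complex.mul_re, Complex.mul_im, Complex.ofReal_re,
      Complex.ofReal_im, Complex.conj_re, Complex.conj_im]
    have := skew_sum_zero (fun i j => A i j * ((x i).re * (x j).im - (x i).im * (x j).re))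
      (fun i j => by simp only [hsym i j]; ring)
    refine Eq.trans ?_ this
    refine Finset.sum_congr rfl fun i _ => Finset.sum_congr rfl fun j _ => by ring

lemma rayleigh (hn : 0 < n) {A : Matrix (Fin n) (Fin n) ℝ} (hA : A.IsHermitian)
    (v : Fin n → ℝ) :
    (⨅ i, hA.eigenvalues i) * (v ⬝ᵥ v) ≤ v ⬝ᵥ (A *ᵥ v) ∧
      v ⬝ᵥ (A *ᵥ v) ≤ (⨆ i, hA.eigenvalues i) * (v ⬝ᵥ v) := by
  haveI : Nonempty (Fin n) := ⟨⟨0, hn⟩⟩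
  set U : Matrix (Fin n) (Fin n) ℝ := (hA.eigenvectorUnitary : Matrix (Fin n) (Fin n) ℝ) with hUdef
  have hUs : (U : Matrix (Fin n) (Fin n) ℝ) * star U = 1 :=
    Matrix.mem_unitaryGroup_iff.mp hA.eigenvectorUnitary.2
  have hstar : star (U : Matrix (Fin n) (Fin n) ℝ) = Uᵀ := by
    rw [Matrix.star_eq_conjTranspose, Matrix.conjTranspose_eq_transpose_of_trivial]
  set c : Fin n → ℝ := Uᵀ *ᵥ v with hcdef
  have hvv : v ⬝ᵥ v = c ⬝ᵥ c := by
    have : c ⬝ᵥ c = (U *ᵥ c) ⬝ᵥ v := by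
      rw [hcdef, Matrix.dotProduct_mulVec, Matrix.vecMul_transpose]
    rw [this, hcdef, Matrix.mulVec_mulVec, ← hstar, hUs, Matrix.one_mulVec]
  have hdiag : A = U * Matrix.diagonal hA.eigenvalues * Uᵀ := by
    have := hA.spectral_theorem
    rw [Unitary.conjStarAlgAut_apply, ← hUdef, hstar] at this
    exact this
  have hAv : v ⬝ᵥ (A *ᵥ v) = ∑ i, hA.eigenvalues i * (c i * c i) := by
    have h1 : v ⬝ᵥ (A *ᵥ v) = c ⬝ᵥ ((Matrix.diagonal hA.eigenvalues) *ᵥ c) := by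
      conv_lhs => rw [hdiag]
      rw [← Matrix.mulVec_mulVec, ← Matrix.mulVec_mulVec, Matrix.dotProduct_mulVec,
        ← Matrix.mulVec_transpose, ← hcdef]
    rw [h1]
    simp only [dotProduct, Matrix.mulVec_diagonal]
    exact Finset.sum_congr rfl fun i _ => by ring
  have hcc : c ⬝ᵥ c = ∑ i, c i * c i := rfl
  constructor
  · rw [hAv, hvv, hcc, Finset.mul_sum]
    exact Finset.sum_le_sum fun i _ => mul_le_mul_of_nonneg_right
      (ciInf_le (Set.finite_range _).bddBelow i) (mul_self_nonneg _)
  · rw [hAv, hvv, hcc, Finset.mul_sum]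
    exact Finset.sum_le_sum fun i _ => mul_le_mul_of_nonneg_right
      (le_ciSup (Set.finite_range _).bddAbove i) (mul_self_nonneg _)

lemma conj_form (φ Q : Matrix (Fin n) (Fin n) ℝ) (v : Fin n → ℝ) :
    v ⬝ᵥ ((φ * Q * φᵀ) *ᵥ v) = (φᵀ *ᵥ v) ⬝ᵥ (Q *ᵥ (φᵀ *ᵥ v)) := by
  rw [← Matrix.mulVec_mulVec, ← Matrix.mulVec_mulVec, Matrix.dotProduct_mulVec,
    ← Matrix.mulVec_transpose]

lemma isUnit_map_ofReal {M : Matrix (Fin n) (Fin n) ℝ} (h : IsUnit M) :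
    IsUnit (M.map (Complex.ofReal)) := by
  rw [Matrix.isUnit_iff_isUnit_det] at h ⊢
  have : (M.map (Complex.ofReal)).det = Complex.ofReal M.det := by
    have := RingHom.map_det Complex.ofRealHom M
    rw [RingHom.mapMatrix_apply] at this
    exact this.symm
  rw [this, isUnit_iff_ne_zero]
  simpa using (isUnit_iff_ne_zero.mp h)

lemma iInf_pos_of_pos (hn : 0 < n) {f : Fin n → ℝ} (hf : ∀ i, 0 < f i) :
    0 < ⨅ i, f i := by
  haveI : Nonempty (Fin n) := ⟨⟨0, hn⟩⟩
  obtain ⟨i0, hi0⟩ := Finite.exists_min f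
  exact lt_of_lt_of_le (hf i0) (le_ciInf hi0)

lemma iSup_pos_of_pos (hn : 0 < n) {f : Fin n → ℝ} (hf : ∀ i, 0 < f i) :
    0 < ⨆ i, f i := by
  haveI : Nonempty (Fin n) := ⟨⟨0, hn⟩⟩
  have i0 : Fin n := ⟨0, hn⟩
  exact lt_of_lt_of_le (hf i0) (le_ciSup (Set.finite_range f).bddAbove i0)

lemma dp_self_nonneg (v : Fin n → ℝ) : 0 ≤ v ⬝ᵥ v :=
  Finset.sum_nonneg fun i _ => mul_self_nonneg _

lemma dp_self_pos {v : Fin n → ℝ} (hv : v ≠ 0) : 0 < v ⬝ᵥ v := by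
  rcases lt_or_eq_of_le (dp_self_nonneg v) with h | h
  · exact h
  · exact absurd (dotProduct_self_eq_zero.mp h.symm) hv


lemma quad_real_pos (a b c : ℝ) (lam : ℂ) (hc : 0 < c) (ha : 0 < a) (hb : 0 < b)
    (hdisc : 4 * c * b ≤ a ^ 2)
    (heq : (c:ℂ) * lam ^ 2 - (a:ℂ) * lam + (b:ℂ) = 0) :
    lam.im = 0 ∧ 0 < lam.re := by
  set u := lam.re with hu
  set v := lam.im with hv
  have h1 : c * (u * u - v * v) - a * u + b = 0 := by
    have := congrArg Complex.re heq
    simpa [pow_two, Complex.mul_re, Complex.mul_im, hu, hv] using this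
  have h2 : c * (u * v + v * u) - a * v = 0 := by
    have := congrArg Complex.im heq
    simpa [pow_two, Complex.mul_re, Complex.mul_im, hu, hv] using this
  have hv0 : v = 0 := by
    by_contra hne
    have h3 : 2 * c * u = a := by
      have : v * (2 * c * u - a) = 0 := by linear_combination h2
      rcases mul_eq_zero.1 this with h | h
      · exact absurd h hne
      · linarith
    have h4 : a * u = 2*c*u*u := by linear_combination (-u) * h3
    have hb' : b = c*(u*u) + c*(v*v) := by linear_combination h1 + h4
    have ha2 : a^2 = 4*(c*(c*(u*u))) := by linear_combination (-(a+2*c*u)) * h3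
    nlinarith [hdisc, hb', ha2, mul_pos (mul_pos hc hc) (mul_self_pos.2 hne)]
  refine ⟨hv0, ?_⟩
  rw [hv0] at h1
  by_contra hle
  push_neg at hle
  nlinarith [mul_nonneg (mul_nonneg hc.le (neg_nonneg.2 hle)) (neg_nonneg.2 hle)]

end SaddleAux

set_option maxHeartbeats 1000000 in
/-- Theorem 2: let `M⋆ ≻ 0` with `M⋆⁻¹ = φ_Mᵀ φ_M`, `P = φ_Pᵀ φ_P ≻ 0`,
and `R ≻ 0`. If `4 λ_max(P) λ_max(M⋆) ≤ λ_min(R)²`, then every eigenvalue of the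
saddle-point matrix `N = [[φ_M R φ_Mᵀ, φ_M φ_Pᵀ],[−φ_P φ_Mᵀ, 0]]` is real and positive. -/
theorem saddle_point_spectrum_real_positive {n : ℕ} (hn : 1 ≤ n)
    (φM φP R : Matrix (Fin n) (Fin n) ℝ)
    (hφM : IsUnit φM) (hφP : IsUnit φP) (hR : R.PosDef)
    (Mstar : Matrix (Fin n) (Fin n) ℝ) (hMstar : Mstar.PosDef)
    (hMinv : Mstar⁻¹ = φMᵀ * φM)
    (P : Matrix (Fin n) (Fin n) ℝ) (hPdef : P = φPᵀ * φP) (hP : P.PosDef)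
    (N : Matrix (Fin n ⊕ Fin n) (Fin n ⊕ Fin n) ℝ)
    (hN : N = Matrix.fromBlocks (φM * R * φMᵀ) (φM * φPᵀ) (-(φP * φMᵀ)) 0)
    (hcond : 4 * (⨆ i, hP.1.eigenvalues i) * (⨆ i, hMstar.1.eigenvalues i)
      ≤ (⨅ i, hR.1.eigenvalues i) ^ 2) :
    ∀ (lam : ℂ) (w : (Fin n ⊕ Fin n) → ℂ), w ≠ 0 →
      (N.map (Complex.ofReal)) *ᵥ w = lam • w →
      lam.im = 0 ∧ 0 < lam.re := by
  intro lam w hw hmv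
  classical
  have hn0 : 0 < n := hn
  -- symmetric matrices
  have hRsym : Rᵀ = R := by
    rw [← Matrix.conjTranspose_eq_transpose_of_trivial]; exact hR.1
  have hPsym : Pᵀ = P := by rw [hPdef]; simp [Matrix.transpose_mul]
  have hMssym : Mstarᵀ = Mstar := by
    rw [← Matrix.conjTranspose_eq_transpose_of_trivial]; exact hMstar.1
  have hAsym : (φM * R * φMᵀ)ᵀ = φM * R * φMᵀ := by
    simp [Matrix.transpose_mul, Matrix.mul_assoc, hRsym]
  have hBCsym : (φM * P * φMᵀ)ᵀ = φM * P * φMᵀ := by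
    simp [Matrix.transpose_mul, Matrix.mul_assoc, hPsym]
  -- units
  have hφMT : IsUnit φMᵀ := by
    rw [Matrix.isUnit_iff_isUnit_det, Matrix.det_transpose,
      ← Matrix.isUnit_iff_isUnit_det]; exact hφM
  have hPMunit : IsUnit (φP * φMᵀ) := hφP.mul hφMT
  have hφPT : IsUnit φPᵀ := by
    rw [Matrix.isUnit_iff_isUnit_det, Matrix.det_transpose,
      ← Matrix.isUnit_iff_isUnit_det]; exact hφP
  have hMPunit : IsUnit (φM * φPᵀ) := hφM.mul hφPT
  -- block equations
  set xx : Fin n → ℂ := w ∘ Sum.inl with hxx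
  set yy : Fin n → ℂ := w ∘ Sum.inr with hyy
  have hw' : w = Sum.elim xx yy := (Sum.elim_comp_inl_inr w).symm
  set Am := (φM * R * φMᵀ).map (Complex.ofReal) with hAm
  set Bm := (φM * φPᵀ).map (Complex.ofReal) with hBm
  set Cm := (φP * φMᵀ).map (Complex.ofReal) with hCm
  have hmap : N.map (Complex.ofReal) = Matrix.fromBlocks Am Bm (-Cm) 0 := by
    rw [hN, Matrix.fromBlocks_map]
    have h1 : (-(φP * φMᵀ)).map (Complex.ofReal) = -Cm := by
      ext i j; simp [Matrix.map_apply, hCm]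
    have h2 : (0 : Matrix (Fin n) (Fin n) ℝ).map (Complex.ofReal)
        = (0 : Matrix (Fin n) (Fin n) ℂ) := by
      ext i j; simp [Matrix.map_apply]
    rw [h1, h2]
  rw [hmap, hw', Matrix.fromBlocks_mulVec] at hmv
  have eq1 : Am *ᵥ xx + Bm *ᵥ yy = lam • xx := funext fun i => congrFun hmv (Sum.inl i)
  have eq2' : (-Cm) *ᵥ xx + (0 : Matrix (Fin n) (Fin n) ℂ) *ᵥ yy = lam • yy :=
    funext fun i => congrFun hmv (Sum.inr i)
  have eq2 : -(Cm *ᵥ xx) = lam • yy := by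
    rwa [Matrix.neg_mulVec, Matrix.zero_mulVec, add_zero] at eq2'
  have hCunit : IsUnit Cm := SaddleAux.isUnit_map_ofReal hPMunit
  have hBunit : IsUnit Bm := SaddleAux.isUnit_map_ofReal hMPunit
  have hwelim : ∀ (hx0 : xx = 0) (hy0 : yy = 0), False := by
    intro hx0 hy0
    apply hw
    rw [hw', hx0, hy0]
    funext i; cases i <;> rfl
  have hlam : lam ≠ 0 := by
    intro h0
    rw [h0, zero_smul] at eq2
    have hx0 : xx = 0 := by
      apply Matrix.mulVec_injective_iff_isUnit.mpr hCunit
      rw [Matrix.mulVec_zero, ← neg_eq_zero]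
      exact eq2
    rw [h0, zero_smul, hx0, Matrix.mulVec_zero, zero_add] at eq1
    exact hwelim hx0 (Matrix.mulVec_injective_iff_isUnit.mpr hBunit
      (by rw [Matrix.mulVec_zero]; exact eq1))
  have hx : xx ≠ 0 := by
    intro hx0
    rw [hx0, Matrix.mulVec_zero, neg_zero] at eq2
    exact hwelim hx0 ((smul_eq_zero.mp eq2.symm).resolve_left hlam)
  -- the complex quadratic relation
  have key : lam • (Am *ᵥ xx) - ((Bm * Cm) *ᵥ xx) = (lam ^ 2) • xx := by
    have e2 : lam • (Bm *ᵥ yy) = -((Bm * Cm) *ᵥ xx) := by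
      rw [← Matrix.mulVec_smul, ← eq2, Matrix.mulVec_neg, Matrix.mulVec_mulVec]
    have e1 : lam • (Am *ᵥ xx) + lam • (Bm *ᵥ yy) = (lam ^ 2) • xx := by
      rw [← smul_add, eq1, smul_smul, ← pow_two]
    rw [sub_eq_add_neg, ← e2]; exact e1
  have keydot : lam * (star xx ⬝ᵥ (Am *ᵥ xx)) - (star xx ⬝ᵥ ((Bm * Cm) *ᵥ xx))
      = lam ^ 2 * (star xx ⬝ᵥ xx) := by
    have h := congrArg (fun v => star xx ⬝ᵥ v) key
    simpa [dotProduct_sub, dotProduct_smul, smul_eq_mul] using h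
  -- real quantities
  set xr : Fin n → ℝ := fun i => (xx i).re with hxr
  set xi : Fin n → ℝ := fun i => (xx i).im with hxi
  set zr : Fin n → ℝ := φMᵀ *ᵥ xr with hzr
  set zi : Fin n → ℝ := φMᵀ *ᵥ xi with hzi
  set s : ℝ := zr ⬝ᵥ zr + zi ⬝ᵥ zi with hs
  set a : ℝ := zr ⬝ᵥ (R *ᵥ zr) + zi ⬝ᵥ (R *ᵥ zi) with ha
  set b : ℝ := zr ⬝ᵥ (P *ᵥ zr) + zi ⬝ᵥ (P *ᵥ zi) with hb
  set cc : ℝ := zr ⬝ᵥ (Mstar *ᵥ zr) + zi ⬝ᵥ (Mstar *ᵥ zi) with hcc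
  -- identify the three dot products
  have hA' : star xx ⬝ᵥ (Am *ᵥ xx) = (a : ℂ) := by
    rw [hAm, SaddleAux.cquad hAsym, SaddleAux.conj_form, SaddleAux.conj_form,
      ← hxr, ← hxi, ← hzr, ← hzi, ← ha]
  have hmm : ∀ (M1 M2 : Matrix (Fin n) (Fin n) ℝ),
      (M1 * M2).map (Complex.ofReal) = (M1.map Complex.ofReal) * (M2.map Complex.ofReal) := by
    intro M1 M2; ext i j
    simp [Matrix.map_apply, Matrix.mul_apply]
  have hBmCm : Bm * Cm = (φM * P * φMᵀ).map (Complex.ofReal) := by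
    rw [hBm, hCm, ← hmm]
    have : φM * φPᵀ * (φP * φMᵀ) = φM * P * φMᵀ := by
      rw [hPdef]; simp only [Matrix.mul_assoc]
    rw [this]
  have hB' : star xx ⬝ᵥ ((Bm * Cm) *ᵥ xx) = (b : ℂ) := by
    rw [hBmCm, SaddleAux.cquad hBCsym, SaddleAux.conj_form, SaddleAux.conj_form,
      ← hxr, ← hxi, ← hzr, ← hzi, ← hb]
  -- Mstar identity
  have hMs : Mstar = φM⁻¹ * (φMᵀ)⁻¹ := by
    have hdet : IsUnit Mstar.det := isUnit_iff_ne_zero.mpr (ne_of_gt hMstar.det_pos)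
    rw [← Matrix.nonsing_inv_nonsing_inv Mstar hdet, hMinv, Matrix.mul_inv_rev]
  have mstar_form : ∀ v : Fin n → ℝ, v ⬝ᵥ v = (φMᵀ *ᵥ v) ⬝ᵥ (Mstar *ᵥ (φMᵀ *ᵥ v)) := by
    intro v
    have h1 : Mstar *ᵥ (φMᵀ *ᵥ v) = φM⁻¹ *ᵥ v := by
      rw [hMs, Matrix.mulVec_mulVec, Matrix.mul_assoc,
        Matrix.nonsing_inv_mul _ ((Matrix.isUnit_iff_isUnit_det _).mp hφMT),
        Matrix.mul_one]
    rw [h1, Matrix.dotProduct_mulVec, ← Matrix.mulVec_transpose,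
      Matrix.transpose_nonsing_inv, Matrix.mulVec_mulVec,
      Matrix.nonsing_inv_mul _ ((Matrix.isUnit_iff_isUnit_det _).mp hφMT),
      Matrix.one_mulVec]
  have hcx : cc = xr ⬝ᵥ xr + xi ⬝ᵥ xi := by
    rw [hcc, hzr, hzi, ← mstar_form xr, ← mstar_form xi]
  have hC' : star xx ⬝ᵥ xx = (cc : ℂ) := by
    have h1 : star xx ⬝ᵥ xx = star xx ⬝ᵥ (((1 : Matrix (Fin n) (Fin n) ℝ).map
        (Complex.ofReal)) *ᵥ xx) := by
      rw [Matrix.map_one _ Complex.ofReal_zero Complex.ofReal_one, Matrix.one_mulVec]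
    rw [h1, SaddleAux.cquad Matrix.transpose_one, ← hxr, ← hxi]
    rw [Matrix.one_mulVec, Matrix.one_mulVec, hcx]
  have heq : (cc : ℂ) * lam ^ 2 - (a : ℂ) * lam + (b : ℂ) = 0 := by
    rw [hA', hB', hC'] at keydot
    linear_combination -keydot
  -- positivity
  have hxri : xr ≠ 0 ∨ xi ≠ 0 := by
    by_contra hcon
    push_neg at hcon
    apply hx
    funext i
    exact Complex.ext (congrFun hcon.1 i) (congrFun hcon.2 i)
  have hMTinj := Matrix.mulVec_injective_iff_isUnit.mpr hφMT
  have hspos : 0 < s := by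
    rcases hxri with h | h
    · have hzrne : zr ≠ 0 := by
        rw [hzr]; intro h0
        exact h (hMTinj (by rw [h0, Matrix.mulVec_zero]))
      have := SaddleAux.dp_self_pos hzrne
      have := SaddleAux.dp_self_nonneg zi
      rw [hs]; linarith
    · have hzine : zi ≠ 0 := by
        rw [hzi]; intro h0
        exact h (hMTinj (by rw [h0, Matrix.mulVec_zero]))
      have := SaddleAux.dp_self_pos hzine
      have := SaddleAux.dp_self_nonneg zr
      rw [hs]; linarith
  set lR : ℝ := ⨅ i, hR.1.eigenvalues i with hlR
  set lP : ℝ := ⨆ i, hP.1.eigenvalues i with hlP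
  set lM : ℝ := ⨆ i, hMstar.1.eigenvalues i with hlM
  have hlRpos : 0 < lR := SaddleAux.iInf_pos_of_pos hn0 hR.eigenvalues_pos
  have hlPpos : 0 < lP := SaddleAux.iSup_pos_of_pos hn0 hP.eigenvalues_pos
  have hlMpos : 0 < lM := SaddleAux.iSup_pos_of_pos hn0 hMstar.eigenvalues_pos
  have hra1 := SaddleAux.rayleigh hn0 hR.1 zr
  have hra2 := SaddleAux.rayleigh hn0 hR.1 zi
  have hpa1 := SaddleAux.rayleigh hn0 hP.1 zr
  have hpa2 := SaddleAux.rayleigh hn0 hP.1 zi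
  have hma1 := SaddleAux.rayleigh hn0 hMstar.1 zr
  have hma2 := SaddleAux.rayleigh hn0 hMstar.1 zi
  have haR : lR * s ≤ a := by
    rw [ha, hs, hlR]
    nlinarith [hra1.1, hra2.1]
  have hbP : b ≤ lP * s := by
    rw [hb, hs, hlP]; nlinarith [hpa1.2, hpa2.2]
  have hcM : cc ≤ lM * s := by
    rw [hcc, hs, hlM]; nlinarith [hma1.2, hma2.2]
  have hbpos : 0 < b := by
    have hlPmin : 0 < ⨅ i, hP.1.eigenvalues i :=
      SaddleAux.iInf_pos_of_pos hn0 hP.eigenvalues_pos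
    have h3 : 0 < (⨅ i, hP.1.eigenvalues i) * (zr ⬝ᵥ zr + zi ⬝ᵥ zi) := by
      rw [← hs]; exact mul_pos hlPmin hspos
    rw [hb]; nlinarith [hpa1.1, hpa2.1, h3]
  have hcpos : 0 < cc := by
    rw [hcx]
    rcases hxri with h | h
    · have := SaddleAux.dp_self_pos h
      have := SaddleAux.dp_self_nonneg xi
      linarith
    · have := SaddleAux.dp_self_pos h
      have := SaddleAux.dp_self_nonneg xr
      linarith
  have hapos : 0 < a := lt_of_lt_of_le (mul_pos hlRpos hspos) haR
  have hdisc : 4 * cc * b ≤ a ^ 2 := by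
    have h5 : 4 * cc * b ≤ 4 * (lM * s) * (lP * s) := by
      nlinarith [hcM, hbP, hbpos, hcpos, mul_pos hlPpos hspos, mul_pos hlMpos hspos]
    have h7 : (4 * lP * lM) * s ^ 2 ≤ lR ^ 2 * s ^ 2 :=
      mul_le_mul_of_nonneg_right hcond (sq_nonneg s)
    have h9 : (lR * s) ^ 2 ≤ a ^ 2 :=
      pow_le_pow_left₀ (le_of_lt (mul_pos hlRpos hspos)) haR 2
    nlinarith
  exact SaddleAux.quad_real_pos a b cc lam hcpos hapos hbpos hdisc heq
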